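/- Let π(x) = Π_{α ∈ Φ_+} ⟨α, x⟩ be the product of positive roots of a root system Φ in R^d, and let ∂(π) = Π_{α ∈ Φ_+} ∂_α be the corresponding constant-coefficient differential operator (composition of directional derivatives in the directions of the positive roots). Then ∂(π)π is a nonzero constant. -/

import Mathlib

local notation "⟪" x ", " y "⟫" => @inner ℝ _ _ x y

/-- Directional derivative `∂_v f`. -/
noncomputable def dirDeriv {d : ℕ} (v : EuclideanSpace ℝ (Fin d))
    (f : EuclideanSpace ℝ (Fin d) → ℝ) : EuclideanSpace ℝ (Fin d) → ℝ :=
  fun x => fderiv ℝ f x v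

/-- Iterated directional derivatives along a list of vectors. -/
noncomputable def iterDeriv {d : ℕ} (l : List (EuclideanSpace ℝ (Fin d)))
    (f : EuclideanSpace ℝ (Fin d) → ℝ) : EuclideanSpace ℝ (Fin d) → ℝ :=
  l.foldr dirDeriv f

namespace Stmt10

variable {d : ℕ}

abbrev V (d : ℕ) := EuclideanSpace ℝ (Fin d)

/-- product of linear forms given by a list of vectors -/
noncomputable def P (l : List (V d)) : V d → ℝ :=
  fun x => (l.map fun a => ⟪a, x⟫).prod

@[simp] lemma P_nil : P ([] : List (V d)) = fun _ => 1 := rfl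

lemma P_cons (a : V d) (l : List (V d)) : P (a :: l) = fun x => ⟪a, x⟫ * P l x := rfl

lemma contDiff_P (l : List (V d)) : ContDiff ℝ ⊤ (P l) := by
  induction l with
  | nil => simpa using contDiff_const
  | cons a l ih =>
    rw [P_cons]
    exact (contDiff_const.inner ℝ contDiff_id).mul ih

lemma contDiff_dirDeriv {f : V d → ℝ} (v : V d) (hf : ContDiff ℝ ⊤ f) :
    ContDiff ℝ ⊤ (dirDeriv v f) := by
  exact (hf.fderiv_right (m := ⊤) le_rfl).clm_apply (contDiff_const (c := v))


lemma contDiff_iterDeriv (l : List (V d)) {f : V d → ℝ} (hf : ContDiff ℝ ⊤ f) :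
    ContDiff ℝ ⊤ (iterDeriv l f) := by
  induction l with
  | nil => exact hf
  | cons a l ih => exact contDiff_dirDeriv a ih

lemma dirDeriv_P (v : V d) (m : List (V d)) :
    dirDeriv v (P m) =
      fun x => ∑ i : Fin m.length, ⟪m.get i, v⟫ * P (m.eraseIdx i) x := by
  induction m with
  | nil =>
    funext x
    simp only [P_nil, dirDeriv, fderiv_const]
    simp
  | cons a l ih =>
    funext x
    have hda : DifferentiableAt ℝ (fun y : V d => ⟪a, y⟫) x :=
      ((contDiff_const.inner ℝ contDiff_id : ContDiff ℝ ⊤ (fun y : V d => ⟪a, y⟫)).differentiable (by simp)).differentiableAt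
    have hdP : DifferentiableAt ℝ (P l) x :=
      ((contDiff_P l).differentiable (by simp)).differentiableAt
    have hmul : dirDeriv v (P (a :: l)) x
        = ⟪a, v⟫ * P l x + ⟪a, x⟫ * dirDeriv v (P l) x := by
      have : P (a :: l) = fun y => (fun y : V d => ⟪a, y⟫) y * P l y := rfl
      rw [dirDeriv, this, fderiv_fun_mul hda hdP]
      have hfa : fderiv ℝ (fun y : V d => ⟪a, y⟫) x = innerSL ℝ a := by
        exact (innerSL ℝ a).fderiv
      simp only [ContinuousLinearMap.add_apply, ContinuousLinearMap.smul_apply,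
        ContinuousLinearMap.coe_smul', Pi.smul_apply, hfa]
      simp only [innerSL_apply_apply, smul_eq_mul, dirDeriv]
      ring
    rw [hmul, ih]
    show _ = ∑ i : Fin (l.length + 1), _
    rw [Fin.sum_univ_succ]
    simp only [List.get_eq_getElem, List.length_cons, Fin.val_zero,
      List.getElem_cons_zero, List.eraseIdx_cons_zero, Fin.val_succ,
      List.getElem_cons_succ, List.eraseIdx_cons_succ]
    rw [Finset.mul_sum]
    congr 1
    refine Finset.sum_congr rfl fun i _ => ?_
    rw [P_cons]
    ring

lemma dirDeriv_sum {ι : Type*} (s : Finset ι) (c : ι → ℝ) (f : ι → V d → ℝ)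
    (hf : ∀ i, ContDiff ℝ ⊤ (f i)) (v : V d) :
    dirDeriv v (fun x => ∑ i ∈ s, c i * f i x)
      = fun x => ∑ i ∈ s, c i * dirDeriv v (f i) x := by
  funext x
  have hdi : ∀ i ∈ s, DifferentiableAt ℝ (fun x => c i * f i x) x := fun i _ =>
    (((hf i).differentiable (by simp)).differentiableAt).const_mul _
  rw [dirDeriv, fderiv_fun_sum hdi]
  simp only [ContinuousLinearMap.coe_sum', Finset.sum_apply]
  refine Finset.sum_congr rfl fun i _ => ?_
  rw [fderiv_const_mul (((hf i).differentiable (by simp)).differentiableAt)]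
  simp [dirDeriv]

lemma iterDeriv_sum {ι : Type*} (l : List (V d)) (s : Finset ι) (c : ι → ℝ)
    (f : ι → V d → ℝ) (hf : ∀ i, ContDiff ℝ ⊤ (f i)) :
    iterDeriv l (fun x => ∑ i ∈ s, c i * f i x)
      = fun x => ∑ i ∈ s, c i * iterDeriv l (f i) x := by
  induction l with
  | nil => rfl
  | cons v l ih =>
    show dirDeriv v (iterDeriv l _) = _
    rw [ih, dirDeriv_sum s c _ (fun i => contDiff_iterDeriv l (hf i)) v]
    rfl

lemma iterDeriv_append (l : List (V d)) (v : V d) (f : V d → ℝ) :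
    iterDeriv (l ++ [v]) f = iterDeriv l (dirDeriv v f) := by
  simp [iterDeriv, List.foldr_append]

noncomputable def permSum {n : ℕ} (f g : Fin n → V d) : ℝ :=
  ∑ σ : Equiv.Perm (Fin n), ∏ i, ⟪g (σ i), f i⟫

/-- Insert a value at the last slot: bijection between `Fin (n+1) × Perm (Fin n)`
and `Perm (Fin (n+1))`. -/
def insPerm {n : ℕ} (p : Fin (n + 1) × Equiv.Perm (Fin n)) : Equiv.Perm (Fin (n + 1)) :=
  ((finSuccEquiv' (Fin.last n)).trans (Equiv.optionCongr p.2)).trans (finSuccEquiv' p.1).symm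

@[simp] lemma insPerm_last {n : ℕ} (p : Fin (n + 1) × Equiv.Perm (Fin n)) :
    insPerm p (Fin.last n) = p.1 := by
  show (finSuccEquiv' p.1).symm (Equiv.optionCongr p.2 (finSuccEquiv' (Fin.last n) (Fin.last n))) = p.1
  rw [finSuccEquiv'_at]
  rfl

@[simp] lemma insPerm_castSucc {n : ℕ} (p : Fin (n + 1) × Equiv.Perm (Fin n)) (j : Fin n) :
    insPerm p (Fin.castSucc j) = p.1.succAbove (p.2 j) := by
  have h : Fin.castSucc j = (Fin.last n).succAbove j := by simp
  show (finSuccEquiv' p.1).symm (Equiv.optionCongr p.2 (finSuccEquiv' (Fin.last n) (Fin.castSucc j))) = _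
  rw [h, finSuccEquiv'_succAbove]
  rfl

lemma insPerm_bijective (n : ℕ) : Function.Bijective (insPerm (n := n)) := by
  rw [Fintype.bijective_iff_injective_and_card]
  constructor
  · rintro ⟨i, τ⟩ ⟨i', τ'⟩ h
    have hl : i = i' := by
      have := congrArg (fun σ : Equiv.Perm (Fin (n+1)) => σ (Fin.last n)) h
      simpa using this
    subst hl
    have hτ : τ = τ' := by
      ext j
      have := congrArg (fun σ : Equiv.Perm (Fin (n+1)) => σ (Fin.castSucc j)) h
      simp only [insPerm_castSucc] at this
      exact congrArg Fin.val (Fin.succAbove_right_injective this)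
    rw [hτ]
  · simp [Fintype.card_perm, Nat.factorial_succ]

lemma permSum_succ {n : ℕ} (f g : Fin (n + 1) → V d) :
    permSum f g = ∑ i : Fin (n + 1), ⟪g i, f (Fin.last n)⟫ *
      permSum (f ∘ Fin.castSucc) (g ∘ i.succAbove) := by
  rw [permSum, ← Function.Bijective.sum_comp (insPerm_bijective n)
    (fun σ => ∏ i, ⟪g (σ i), f i⟫)]
  rw [Fintype.sum_prod_type]
  refine Finset.sum_congr rfl fun i _ => ?_
  rw [permSum, Finset.mul_sum]
  refine Finset.sum_congr rfl fun τ _ => ?_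
  rw [Fin.prod_univ_castSucc]
  simp only [insPerm_castSucc, insPerm_last, Function.comp_apply]
  ring

lemma permSum_congr {n : ℕ} {f f' g g' : Fin n → V d}
    (hf : f = f') (hg : g = g') : permSum f g = permSum f' g' := by rw [hf, hg]

lemma iterDeriv_P : ∀ (l : List (V d)) {n : ℕ} (m : List (V d))
    (hl : l.length = n) (hm : m.length = n),
    iterDeriv l (P m)
      = fun _ => permSum (l.get ∘ Fin.cast hl.symm) (m.get ∘ Fin.cast hm.symm) := by
  intro l
  induction l using List.reverseRecOn with
  | nil =>
    intro n m hl hm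
    subst hl
    have hm0 : m = [] := List.length_eq_zero_iff.mp hm
    subst hm0
    funext x
    simp only [iterDeriv, List.foldr_nil, P_nil, permSum]
    simp
  | append_singleton l v ih =>
    intro n m hl0 hm
    have hl1 : l.length + 1 = n := by simpa using hl0
    obtain ⟨k, rfl⟩ : ∃ k, n = k + 1 := ⟨l.length, by omega⟩
    have hlk : l.length = k := by omega
    rw [iterDeriv_append, dirDeriv_P,
      iterDeriv_sum l Finset.univ (fun i : Fin m.length => ⟪m.get i, v⟫)
        (fun i => P (m.eraseIdx i)) (fun i => contDiff_P _)]
    have herase : ∀ i : Fin m.length, (m.eraseIdx i).length = k := by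
      intro i
      rw [List.length_eraseIdx_of_lt i.isLt, hm]
      omega
    funext x
    rw [permSum_succ]
    rw [← Fin.sum_congr' _ hm]
    refine Finset.sum_congr rfl fun i _ => ?_
    rw [ih (m.eraseIdx i) hlk (herase i)]
    have hf1 : ((l ++ [v]).get ∘ Fin.cast hl0.symm) ∘ Fin.castSucc
        = l.get ∘ Fin.cast hlk.symm := by
      funext j
      simp only [Function.comp_apply, List.get_eq_getElem, Fin.coe_cast, Fin.coe_castSucc]
      exact List.getElem_append_left (by omega)
    have hlast : ((l ++ [v]).get ∘ Fin.cast hl0.symm) (Fin.last k) = v := by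
      simp only [Function.comp_apply, List.get_eq_getElem, Fin.coe_cast, Fin.val_last]
      exact List.getElem_concat_length (l := l) (a := v) hlk.symm ..
    have hg1 : (m.eraseIdx ↑i).get ∘ Fin.cast (herase i).symm
        = (m.get ∘ Fin.cast hm.symm) ∘ (Fin.cast hm i).succAbove := by
      funext j
      simp only [Function.comp_apply, List.get_eq_getElem, Fin.coe_cast]
      rw [List.getElem_eraseIdx]
      rw [Fin.succAbove]
      by_cases hji : (j : ℕ) < (i : ℕ)
      · have : Fin.castSucc j < Fin.cast hm i := by
          simp [Fin.lt_def, hji]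
        rw [dif_pos hji, if_pos this]
        simp
      · have : ¬ Fin.castSucc j < Fin.cast hm i := by
          simp [Fin.lt_def, hji]
        rw [dif_neg hji, if_neg this]
        simp
    rw [hf1, hlast, hg1]
    dsimp only
    congr 2


lemma inner_eq (x y : V d) : ⟪x, y⟫ = ∑ k, x k * y k := by
  simp [PiLp.inner_apply, conj_trivial]
  exact Finset.sum_congr rfl fun _ _ => mul_comm _ _

lemma sum_precomp {n : ℕ} (σ : Equiv.Perm (Fin n)) (F : (Fin n → Fin d) → ℝ) :
    ∑ g : Fin n → Fin d, F (g ∘ σ) = ∑ g : Fin n → Fin d, F g := by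
  apply Fintype.sum_bijective (fun g : Fin n → Fin d => g ∘ σ)
  · constructor
    · intro g g' hgg
      funext i
      have := congrFun hgg (σ.symm i)
      simpa using this
    · intro g
      exact ⟨g ∘ σ.symm, by funext i; simp⟩
  · intro g
    rfl

/-- existence of a vector not orthogonal to any of finitely many nonzero vectors -/
lemma exists_generic {ι : Type*} (s : Finset ι) (f : ι → V d) (hs : ∀ i ∈ s, f i ≠ 0) :
    ∃ x : V d, ∀ i ∈ s, ⟪f i, x⟫ ≠ 0 := by
  classical
  induction s using Finset.induction with
  | empty => exact ⟨0, by simp⟩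
  | @insert a s hnot ih =>
    obtain ⟨x, hx⟩ := ih fun i hi => hs i (Finset.mem_insert_of_mem hi)
    have ha : f a ≠ 0 := hs a (Finset.mem_insert_self a s)
    -- bad values of t
    set B : Finset ℝ := insert (-⟪f a, x⟫ / ‖f a‖ ^ 2)
      (s.image fun b => -⟪f b, x⟫ / ⟪f b, f a⟫) with hB
    obtain ⟨t, ht⟩ := Infinite.exists_notMem_finset B
    refine ⟨x + t • f a, ?_⟩
    intro i hi
    rcases Finset.mem_insert.mp hi with rfl | hi
    · rw [inner_add_right, real_inner_smul_right, real_inner_self_eq_norm_sq]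
      have h2 : (‖f i‖ : ℝ) ^ 2 ≠ 0 :=
        pow_ne_zero 2 (norm_ne_zero_iff.mpr (hs i (Finset.mem_insert_self i s)))
      intro hcon
      apply ht
      rw [hB]
      apply Finset.mem_insert.mpr
      left
      rw [eq_comm, div_eq_iff h2]
      linarith
    · rw [inner_add_right, real_inner_smul_right]
      by_cases hba : ⟪f i, f a⟫ = 0
      · simpa [hba] using hx i hi
      · intro hcon
        apply ht
        rw [hB]
        apply Finset.mem_insert_of_mem
        refine Finset.mem_image.mpr ⟨i, hi, ?_⟩
        rw [div_eq_iff hba]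
        linarith

noncomputable def Tf {n : ℕ} (f : Fin n → V d) (g : Fin n → Fin d) : ℝ :=
  ∏ i, f i (g i)

noncomputable def Uf {n : ℕ} (f : Fin n → V d) (g : Fin n → Fin d) : ℝ :=
  ∑ σ : Equiv.Perm (Fin n), Tf f (g ∘ σ)

lemma prod_inner_eq {n : ℕ} (f h : Fin n → V d) :
    ∏ i, ⟪f i, h i⟫ = ∑ g : Fin n → Fin d, (∏ i, f i (g i)) * ∏ i, h i (g i) := by
  calc ∏ i, ⟪f i, h i⟫ = ∏ i, ∑ k, f i k * h i k :=
        Finset.prod_congr rfl fun i _ => inner_eq _ _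
    _ = ∑ g ∈ Fintype.piFinset (fun _ : Fin n => (Finset.univ : Finset (Fin d))),
          ∏ i, f i (g i) * h i (g i) := Finset.prod_univ_sum _ _
    _ = ∑ g : Fin n → Fin d, (∏ i, f i (g i)) * ∏ i, h i (g i) := by
        rw [Fintype.piFinset_univ]
        exact Finset.sum_congr rfl fun g _ => Finset.prod_mul_distrib

lemma Uf_precomp {n : ℕ} (f : Fin n → V d) (g : Fin n → Fin d) (τ : Equiv.Perm (Fin n)) :
    Uf f (g ∘ τ) = Uf f g := by
  rw [Uf, Uf]
  apply Fintype.sum_bijective (fun σ => τ * σ) (Group.mulLeft_bijective τ)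
  intro σ
  congr 1

lemma permSum_self_eq {n : ℕ} (f : Fin n → V d) :
    permSum f f = ∑ g : Fin n → Fin d, Tf f g * Uf f g := by
  have h1 : permSum f f = ∑ σ : Equiv.Perm (Fin n), ∑ g : Fin n → Fin d,
      Tf f (g ∘ ⇑σ⁻¹) * Tf f g := by
    rw [permSum]
    refine Finset.sum_congr rfl fun σ _ => ?_
    rw [prod_inner_eq (fun i => f (σ i)) f]
    refine Finset.sum_congr rfl fun g _ => ?_
    congr 1
    show ∏ i, f (σ i) (g i) = Tf f (g ∘ ⇑σ⁻¹)
    rw [Tf]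
    rw [← Equiv.prod_comp σ (fun j => f j ((g ∘ ⇑σ⁻¹) j))]
    exact Finset.prod_congr rfl fun i _ => by
      rw [Function.comp_apply, Equiv.Perm.inv_def, Equiv.symm_apply_apply]
  rw [h1]
  rw [Fintype.sum_equiv (Equiv.inv (Equiv.Perm (Fin n)))
    (fun σ => ∑ g : Fin n → Fin d, Tf f (g ∘ ⇑σ⁻¹) * Tf f g)
    (fun σ => ∑ g : Fin n → Fin d, Tf f (g ∘ ⇑σ) * Tf f g) (fun σ => rfl)]
  rw [Finset.sum_comm]
  refine Finset.sum_congr rfl fun g _ => ?_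
  rw [Uf, Finset.mul_sum]
  exact Finset.sum_congr rfl fun σ _ => mul_comm _ _

lemma sum_Uf_sq {n : ℕ} (f : Fin n → V d) :
    ∑ g : Fin n → Fin d, (Uf f g) ^ 2
      = (Fintype.card (Equiv.Perm (Fin n)) : ℝ) * permSum f f := by
  have key : ∀ τ : Equiv.Perm (Fin n),
      ∑ g : Fin n → Fin d, Tf f (g ∘ τ) * Uf f g = permSum f f := by
    intro τ
    calc ∑ g : Fin n → Fin d, Tf f (g ∘ τ) * Uf f g
        = ∑ g : Fin n → Fin d, Tf f (g ∘ τ) * Uf f (g ∘ τ) :=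
          Finset.sum_congr rfl fun g _ => by rw [Uf_precomp]
      _ = ∑ g : Fin n → Fin d, Tf f g * Uf f g := sum_precomp τ fun g => Tf f g * Uf f g
      _ = permSum f f := (permSum_self_eq f).symm
  calc ∑ g : Fin n → Fin d, (Uf f g) ^ 2
      = ∑ g : Fin n → Fin d, ∑ τ : Equiv.Perm (Fin n), Tf f (g ∘ τ) * Uf f g := by
        refine Finset.sum_congr rfl fun g _ => ?_
        rw [sq, ← Finset.sum_mul]
        rfl
    _ = ∑ τ : Equiv.Perm (Fin n), ∑ g : Fin n → Fin d, Tf f (g ∘ τ) * Uf f g :=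
        Finset.sum_comm
    _ = ∑ _τ : Equiv.Perm (Fin n), permSum f f := Finset.sum_congr rfl fun τ _ => key τ
    _ = (Fintype.card (Equiv.Perm (Fin n)) : ℝ) * permSum f f := by
        rw [Finset.sum_const, nsmul_eq_mul, Finset.card_univ]

lemma card_mul_prod {n : ℕ} (f : Fin n → V d) (x : V d) :
    (Fintype.card (Equiv.Perm (Fin n)) : ℝ) * ∏ i, ⟪f i, x⟫
      = ∑ g : Fin n → Fin d, Uf f g * ∏ i, x (g i) := by
  calc (Fintype.card (Equiv.Perm (Fin n)) : ℝ) * ∏ i, ⟪f i, x⟫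
      = ∑ _τ : Equiv.Perm (Fin n), ∏ i, ⟪f i, x⟫ := by
        rw [Finset.sum_const, nsmul_eq_mul, Finset.card_univ]
    _ = ∑ τ : Equiv.Perm (Fin n), ∑ g : Fin n → Fin d, Tf f g * ∏ i, x (g i) := by
        refine Finset.sum_congr rfl fun τ _ => ?_
        exact prod_inner_eq f (fun _ => x)
    _ = ∑ τ : Equiv.Perm (Fin n), ∑ g : Fin n → Fin d, Tf f (g ∘ τ) * ∏ i, x (g i) := by
        refine Finset.sum_congr rfl fun τ _ => ?_
        rw [← sum_precomp τ (fun g => Tf f g * ∏ i, x (g i))]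
        refine Finset.sum_congr rfl fun g _ => ?_
        congr 1
        exact Equiv.prod_comp τ (fun j => x (g j))
    _ = ∑ g : Fin n → Fin d, ∑ τ : Equiv.Perm (Fin n), Tf f (g ∘ τ) * ∏ i, x (g i) :=
        Finset.sum_comm
    _ = ∑ g : Fin n → Fin d, Uf f g * ∏ i, x (g i) := by
        refine Finset.sum_congr rfl fun g _ => ?_
        rw [Uf, Finset.sum_mul]

lemma permSum_self_ne_zero {n : ℕ} (f : Fin n → V d) (hf : ∀ i, f i ≠ 0) :
    permSum f f ≠ 0 := by
  intro hzero
  have hsq : ∑ g : Fin n → Fin d, (Uf f g) ^ 2 = 0 := by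
    rw [sum_Uf_sq, hzero, mul_zero]
  have hU0 : ∀ g : Fin n → Fin d, Uf f g = 0 := by
    intro g
    have := (Finset.sum_eq_zero_iff_of_nonneg
      (fun g _ => sq_nonneg (Uf f g))).mp hsq g (Finset.mem_univ g)
    exact pow_eq_zero_iff two_ne_zero |>.mp this
  obtain ⟨x, hx⟩ := exists_generic Finset.univ f (fun i _ => hf i)
  have h5 := card_mul_prod f x
  rw [Finset.sum_eq_zero (fun g _ => by rw [hU0 g, zero_mul])] at h5
  have hcard : (Fintype.card (Equiv.Perm (Fin n)) : ℝ) ≠ 0 := by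
    exact_mod_cast Fintype.card_ne_zero
  have hprod : ∏ i, ⟪f i, x⟫ ≠ 0 :=
    Finset.prod_ne_zero_iff.mpr fun i _ => hx i (Finset.mem_univ i)
  exact (mul_ne_zero hcard hprod) h5

end Stmt10

/-- For a root system `Φ = Φp ∪ (-Φp)` in `ℝ^d` with positive subsystem
`Φp` and `π(x) = ∏_{α ∈ Φ_+} ⟪α, x⟫`, the constant-coefficient differential operator
`∂(π) = ∏_{α ∈ Φ_+} ∂_α` applied to `π` is a nonzero constant. -/
theorem stmt_10 {d : ℕ}
    (Φ Φp : Finset (EuclideanSpace ℝ (Fin d)))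
    (h0 : (0 : EuclideanSpace ℝ (Fin d)) ∉ Φ)
    (hneg : ∀ a ∈ Φ, -a ∈ Φ)
    (hrefl : ∀ a ∈ Φ, ∀ b ∈ Φ, b - (2 * ⟪a, b⟫ / ‖a‖ ^ 2) • a ∈ Φ)
    (hpos : Φp ⊆ Φ)
    (hsplit : ∀ a ∈ Φ, (a ∈ Φp ↔ ¬ (-a ∈ Φp))) :
    ∃ c : ℝ, c ≠ 0 ∧
      iterDeriv Φp.toList (fun x => ∏ a ∈ Φp, ⟪a, x⟫) = fun _ => c := by
  classical
  set L := Φp.toList with hL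
  have hPL : (fun x => ∏ a ∈ Φp, ⟪a, x⟫) = Stmt10.P L := by
    funext x
    rw [Stmt10.P]
    exact (Finset.prod_map_toList Φp _).symm
  have key := Stmt10.iterDeriv_P L L rfl rfl
  refine ⟨_, ?_, by rw [hPL, key]⟩
  apply Stmt10.permSum_self_ne_zero
  intro i
  intro hz
  have hz' : L.get (Fin.cast rfl i) = 0 := hz
  have hmem : L.get (Fin.cast rfl i) ∈ Φp := Finset.mem_toList.mp (List.get_mem L i)
  have hΦ := hpos hmem
  rw [hz'] at hΦ
  exact h0 hΦ
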